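/- Let p be a prime and R a p-nilpotent commutative ring. Applying the ring homomorphism 𝕎 R → 𝕎(R/pR) induced by the quotient map R → R/pR componentwise gives a bijection from the set {y : ℕ → 𝕎 R | ∀ n, frobenius (y (n+1)) = y n} onto the set {z : ℕ → 𝕎(R/pR) | ∀ n, frobenius (z (n+1)) = z n}. -/

import Mathlib

open WittVector MvPolynomial

section Aux

variable {p : ℕ} {R S : Type*} [CommRing R] [CommRing S]

private lemma aeval_sub_dvd (c : R) (g : MvPolynomial ℕ ℤ) {x x' : ℕ → R}
    (h : ∀ n, c ∣ x n - x' n) :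
    c ∣ MvPolynomial.aeval x g - MvPolynomial.aeval x' g := by
  have hx : (fun n => Ideal.Quotient.mk (Ideal.span {c}) (x n)) =
      fun n => Ideal.Quotient.mk (Ideal.span {c}) (x' n) := by
    funext n
    rw [Ideal.Quotient.eq, Ideal.mem_span_singleton]
    exact h n
  rw [← Ideal.mem_span_singleton, ← Ideal.Quotient.eq, map_aeval, map_aeval, hx]

private lemma pow_p_sub_dvd [Fact p.Prime] {k : ℕ} (hk : 1 ≤ k) {a b : R}
    (h : (p : R) ^ k ∣ a - b) : (p : R) ^ (k + 1) ∣ a ^ p - b ^ p := by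
  have hp : p.Prime := Fact.out
  obtain ⟨t, ht⟩ := h
  have ha : a = b + (p : R) ^ k * t := by linear_combination ht
  rw [ha, add_pow_prime_eq hp]
  have h1 : (p : R) ^ (k + 1) ∣ ((p : R) ^ k * t) ^ p := by
    rw [mul_pow, ← pow_mul]
    exact (pow_dvd_pow _ (by nlinarith [hp.two_le])).mul_right _
  have h2 : (p : R) ^ (k + 1) ∣ (p : R) *
      ∑ i ∈ Finset.Ioo 0 p, b ^ i * ((p : R) ^ k * t) ^ (p - i) * ((p.choose i / p : ℕ) : R) := by
    rw [pow_succ']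
    refine mul_dvd_mul_left _ (Finset.dvd_sum fun i hi => ?_)
    rw [Finset.mem_Ioo] at hi
    exact ((dvd_pow (dvd_mul_right _ t) (Nat.sub_ne_zero_of_lt hi.2)).mul_left _).mul_right _
  have heq : b ^ p + ((p : R) ^ k * t) ^ p +
      (p : R) * (∑ i ∈ Finset.Ioo 0 p, b ^ i * ((p : R) ^ k * t) ^ (p - i) *
        ((p.choose i / p : ℕ) : R)) - b ^ p
      = ((p : R) ^ k * t) ^ p + (p : R) *
        ∑ i ∈ Finset.Ioo 0 p, b ^ i * ((p : R) ^ k * t) ^ (p - i) * ((p.choose i / p : ℕ) : R) := by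
    ring
  rw [add_sub_right_comm, add_sub_cancel_left]
  refine dvd_add h1 ?_
  rw [pow_succ']
  exact (mul_dvd_mul (dvd_mul_right _ b) (dvd_mul_right _ t)).mul_right _

private lemma frobenius_coeff_dvd [Fact p.Prime] {k : ℕ} (hk : 1 ≤ k) {x x' : WittVector p R}
    (h : ∀ n, (p : R) ^ k ∣ x.coeff n - x'.coeff n) (n : ℕ) :
    (p : R) ^ (k + 1) ∣ (frobenius x).coeff n - (frobenius x').coeff n := by
  rw [coeff_frobenius, coeff_frobenius, frobeniusPoly]
  simp only [map_add, map_mul, map_pow, aeval_X, aeval_C]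
  have hint : (algebraMap ℤ R) ((p : ℕ) : ℤ) = (p : R) := by simp
  rw [hint]
  have heq : (x.coeff n ^ p + (p : R) * (aeval x.coeff) (frobeniusPolyAux p n)) -
      (x'.coeff n ^ p + (p : R) * (aeval x'.coeff) (frobeniusPolyAux p n))
      = (x.coeff n ^ p - x'.coeff n ^ p) +
        (p : R) * ((aeval x.coeff) (frobeniusPolyAux p n) -
          (aeval x'.coeff) (frobeniusPolyAux p n)) := by ring
  rw [heq]
  refine dvd_add (pow_p_sub_dvd hk (h n)) ?_
  rw [pow_succ']
  exact mul_dvd_mul_left _ (aeval_sub_dvd _ _ h)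

private lemma iterate_frobenius_dvd [Fact p.Prime] {x x' : WittVector p R}
    (h : ∀ n, (p : R) ∣ x.coeff n - x'.coeff n) (m : ℕ) (n : ℕ) :
    (p : R) ^ (1 + m) ∣ (frobenius^[m] x).coeff n - (frobenius^[m] x').coeff n := by
  induction m generalizing n with
  | zero => simpa using h n
  | succ m ih =>
      rw [Function.iterate_succ_apply', Function.iterate_succ_apply', show 1 + (m + 1) = (1 + m) + 1 by ring]
      exact frobenius_coeff_dvd (by omega) ih n

private lemma frobenius_iterate_eq [Fact p.Prime] {N : ℕ} (hN : (p : R) ^ N = 0)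
    {x x' : WittVector p R}
    (h : ∀ n, (p : R) ∣ x.coeff n - x'.coeff n) :
    frobenius^[N] x = frobenius^[N] x' := by
  ext n
  have hd := iterate_frobenius_dvd h N n
  rw [show (p : R) ^ (1 + N) = 0 by rw [pow_add, hN, mul_zero]] at hd
  exact sub_eq_zero.mp (zero_dvd_iff.mp hd)

private lemma map_frobenius (f : R →+* S) [Fact p.Prime] (x : WittVector p R) :
    WittVector.map f (frobenius x) = frobenius (WittVector.map f x) := by
  ext n
  have hc : (WittVector.map f x).coeff = fun i => f (x.coeff i) :=
    funext fun i => WittVector.map_coeff f x i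
  rw [WittVector.map_coeff, coeff_frobenius, coeff_frobenius, hc, map_aeval, aeval_eq_eval₂Hom]
  exact eval₂Hom_congr (RingHom.ext_int _ _) rfl rfl

private lemma compat_iterate {z : ℕ → WittVector p S} [Fact p.Prime]
    (hz : ∀ n, frobenius (z (n + 1)) = z n) (k : ℕ) :
    ∀ n, frobenius^[k] (z (n + k)) = z n := by
  induction k with
  | zero => intro n; simp
  | succ k ih =>
      intro n
      rw [Function.iterate_succ_apply', show n + (k + 1) = (n + 1) + k by ring, ih (n + 1), hz n]

end Aux

private lemma map_iterate_frobenius {p : ℕ} {R S : Type*} [CommRing R] [CommRing S]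
    (f : R →+* S) [Fact p.Prime] (m : ℕ)
    (x : WittVector p R) :
    WittVector.map f (frobenius^[m] x) = frobenius^[m] (WittVector.map f x) := by
  induction m with
  | zero => rfl
  | succ m ih =>
      rw [Function.iterate_succ_apply', Function.iterate_succ_apply', map_frobenius, ih]



/-- If `R` is `p`-nilpotent, applying `𝕎 R → 𝕎 (R/pR)` componentwise gives a bijection
between Frobenius-compatible sequences in `𝕎 R` and in `𝕎 (R/pR)`. -/
theorem frobenius_compatible_sequences_bijOn (p : ℕ) [Fact p.Prime] (R : Type*) [CommRing R]
    (hR : ∃ N : ℕ, (p : R) ^ N = 0) :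
    Set.BijOn
      (fun (y : ℕ → WittVector p R) (n : ℕ) =>
        WittVector.map (Ideal.Quotient.mk (Ideal.span {(p : R)})) (y n))
      {y : ℕ → WittVector p R | ∀ n, WittVector.frobenius (y (n + 1)) = y n}
      {z : ℕ → WittVector p (R ⧸ Ideal.span {(p : R)}) |
        ∀ n, WittVector.frobenius (z (n + 1)) = z n} := by
  obtain ⟨N, hN⟩ := hR
  set π : R →+* R ⧸ Ideal.span {(p : R)} := Ideal.Quotient.mk (Ideal.span {(p : R)}) with hπ
  have hdvd : ∀ x x' : WittVector p R, WittVector.map π x = WittVector.map π x' →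
      ∀ n, (p : R) ∣ x.coeff n - x'.coeff n := by
    intro x x' hxx n
    have h := congrArg (fun w => WittVector.coeff w n) hxx
    simp only [WittVector.map_coeff] at h
    rw [← Ideal.mem_span_singleton]
    exact Ideal.Quotient.eq.mp h
  refine ⟨?_, ?_, ?_⟩
  · intro y hy n
    simp only [Set.mem_setOf_eq] at hy ⊢
    rw [← map_frobenius π (y (n + 1)), hy n]
  · intro y hy y' hy' h
    funext n
    rw [← compat_iterate hy N n, ← compat_iterate hy' N n]
    exact frobenius_iterate_eq hN (hdvd _ _ (congrFun h (n + N)))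
  · intro z hz
    simp only [Set.mem_setOf_eq] at hz
    choose x hx using fun n => WittVector.map_surjective π Ideal.Quotient.mk_surjective (z n)
    refine ⟨fun n => frobenius^[N] (x (n + N)), ?_, ?_⟩
    · intro n
      simp only [Set.mem_setOf_eq]
      have hcomm : frobenius (frobenius^[N] (x (n + 1 + N)))
          = frobenius^[N] (frobenius (x (n + 1 + N))) :=
        (Function.iterate_succ_apply' _ N _).symm.trans (Function.iterate_succ_apply _ N _)
      rw [hcomm]
      refine frobenius_iterate_eq hN (hdvd _ _ ?_)
      rw [map_frobenius π, hx, hx, show n + 1 + N = (n + N) + 1 by ring, hz (n + N)]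
    · funext n
      simp only
      rw [map_iterate_frobenius, hx, compat_iterate hz N n]
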